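/- arXiv:2105.08538 — 7 statements merged into one kernel-verified Lean document; each statement's English description precedes it below -/
import Mathlib

section
/- If q(x,y,t) = p(x+my-ct)·exp(i(κx+ωy-rt+θ)) with p a twice differentiable real function and p' not identically zero solves i q_t + a q_{xy} + i b q (q q̄_x - q̄ q_x) = 0, then c = amκ + aω and p satisfies am p'' + (r - aκω) p + 2κb p³ = 0. -/
theorem stmt_0 (a b m c κ ω r θ : ℝ) (ha : a ≠ 0) (hm : m ≠ 0)
    (p : ℝ → ℝ) (hp : ContDiff ℝ 2 p) (hp' : ∃ ξ, deriv p ξ ≠ 0)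
    (q : ℝ → ℝ → ℝ → ℂ)
    (hq : ∀ x y t, q x y t =
      (p (x + m * y - c * t) : ℂ) *
        Complex.exp (Complex.I * ((κ * x + ω * y - r * t + θ : ℝ) : ℂ)))
    (hpde : ∀ x y t,
      Complex.I * deriv (fun s => q x y s) t
        + (a : ℂ) * deriv (fun s => deriv (fun u => q s u t) y) x
        + Complex.I * (b : ℂ) * q x y t *
          (q x y t * (starRingEnd ℂ) (deriv (fun s => q s y t) x)
            - (starRingEnd ℂ) (q x y t) * deriv (fun s => q s y t) x) = 0) :
    c = a * m * κ + a * ω ∧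
      ∀ ξ, a * m * deriv (deriv p) ξ + (r - a * κ * ω) * p ξ + 2 * κ * b * (p ξ) ^ 3 = 0 := by
  have hpd : Differentiable ℝ p := hp.differentiable (by norm_num)
  have hp2 : ContDiff ℝ (1 + 1) p := by norm_num; exact hp
  have hpd2 : Differentiable ℝ (deriv p) :=
    (contDiff_succ_iff_deriv.mp hp2).2.2.differentiable (by norm_num)
  have hP : ∀ z : ℝ, HasDerivAt p (deriv p z) z := fun z => (hpd z).hasDerivAt
  have hP' : ∀ z : ℝ, HasDerivAt (deriv p) (deriv (deriv p) z) z := fun z => (hpd2 z).hasDerivAt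
  -- time derivative
  have hd_t : ∀ x y t : ℝ, deriv (fun s => q x y s) t =
      ((deriv p (x + m * y - c * t) * -c : ℝ) : ℂ)
          * Complex.exp (Complex.I * ((κ * x + ω * y - r * t + θ : ℝ) : ℂ))
        + ((p (x + m * y - c * t) : ℝ) : ℂ)
          * (Complex.exp (Complex.I * ((κ * x + ω * y - r * t + θ : ℝ) : ℂ))
              * (Complex.I * ((-r : ℝ) : ℂ))) := by
    intro x y t
    have hfun : (fun s => q x y s) = fun s => ((p (x + m * y - c * s) : ℝ) : ℂ) *
        Complex.exp (Complex.I * ((κ * x + ω * y - r * s + θ : ℝ) : ℂ)) :=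
      funext fun s => hq x y s
    rw [hfun]
    have h1 : HasDerivAt (fun s : ℝ => x + m * y - c * s) (-c) t := by
      simpa using ((hasDerivAt_id t).const_mul c).const_sub (x + m * y)
    have h2 : HasDerivAt (fun s : ℝ => p (x + m * y - c * s))
        (deriv p (x + m * y - c * t) * -c) t := (hP _).comp t h1
    have h3 : HasDerivAt (fun s : ℝ => κ * x + ω * y - r * s + θ) (-r) t := by
      simpa using (((hasDerivAt_id t).const_mul r).const_sub (κ * x + ω * y)).add_const θ
    have h4 := ((h3.ofReal_comp).const_mul Complex.I).cexp
    exact (h2.ofReal_comp.mul h4).deriv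
  -- x derivative
  have hd_x : ∀ x y t : ℝ, deriv (fun s => q s y t) x =
      ((deriv p (x + m * y - c * t) : ℝ) : ℂ)
          * Complex.exp (Complex.I * ((κ * x + ω * y - r * t + θ : ℝ) : ℂ))
        + ((p (x + m * y - c * t) : ℝ) : ℂ)
          * (Complex.exp (Complex.I * ((κ * x + ω * y - r * t + θ : ℝ) : ℂ))
              * (Complex.I * ((κ : ℝ) : ℂ))) := by
    intro x y t
    have hfun : (fun s => q s y t) = fun s => ((p (s + m * y - c * t) : ℝ) : ℂ) *
        Complex.exp (Complex.I * ((κ * s + ω * y - r * t + θ : ℝ) : ℂ)) :=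
      funext fun s => hq s y t
    rw [hfun]
    have h1 : HasDerivAt (fun s : ℝ => s + m * y - c * t) 1 x := by
      simpa using ((hasDerivAt_id x).add_const (m * y)).sub_const (c * t)
    have h2 : HasDerivAt (fun s : ℝ => p (s + m * y - c * t))
        (deriv p (x + m * y - c * t)) x := by
        have h := (hP (x + m * y - c * t)).comp x h1; rw [mul_one] at h; exact h
    have h3 : HasDerivAt (fun s : ℝ => κ * s + ω * y - r * t + θ) κ x := by
      simpa using ((((hasDerivAt_id x).const_mul κ).add_const (ω * y)).sub_const
        (r * t)).add_const θ
    have h4 := ((h3.ofReal_comp).const_mul Complex.I).cexp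
    exact (h2.ofReal_comp.mul h4).deriv
  -- y derivative
  have hd_y : ∀ x y t : ℝ, deriv (fun u => q x u t) y =
      ((deriv p (x + m * y - c * t) * m : ℝ) : ℂ)
          * Complex.exp (Complex.I * ((κ * x + ω * y - r * t + θ : ℝ) : ℂ))
        + ((p (x + m * y - c * t) : ℝ) : ℂ)
          * (Complex.exp (Complex.I * ((κ * x + ω * y - r * t + θ : ℝ) : ℂ))
              * (Complex.I * ((ω : ℝ) : ℂ))) := by
    intro x y t
    have hfun : (fun u => q x u t) = fun u => ((p (x + m * u - c * t) : ℝ) : ℂ) *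
        Complex.exp (Complex.I * ((κ * x + ω * u - r * t + θ : ℝ) : ℂ)) :=
      funext fun u => hq x u t
    rw [hfun]
    have h1 : HasDerivAt (fun u : ℝ => x + m * u - c * t) m y := by
      simpa using (((hasDerivAt_id y).const_mul m).const_add x).sub_const (c * t)
    have h2 : HasDerivAt (fun u : ℝ => p (x + m * u - c * t))
        (deriv p (x + m * y - c * t) * m) y := (hP _).comp y h1
    have h3 : HasDerivAt (fun u : ℝ => κ * x + ω * u - r * t + θ) ω y := by
      simpa using ((((hasDerivAt_id y).const_mul ω).const_add (κ * x)).sub_const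
        (r * t)).add_const θ
    have h4 := ((h3.ofReal_comp).const_mul Complex.I).cexp
    exact (h2.ofReal_comp.mul h4).deriv
  -- mixed second derivative
  have hd_xy : ∀ x y t : ℝ, deriv (fun s => deriv (fun u => q s u t) y) x =
      (((deriv (deriv p) (x + m * y - c * t) * m : ℝ) : ℂ)
          * Complex.exp (Complex.I * ((κ * x + ω * y - r * t + θ : ℝ) : ℂ))
        + ((deriv p (x + m * y - c * t) * m : ℝ) : ℂ)
          * (Complex.exp (Complex.I * ((κ * x + ω * y - r * t + θ : ℝ) : ℂ))
              * (Complex.I * ((κ : ℝ) : ℂ))))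
      + (((deriv p (x + m * y - c * t) : ℝ) : ℂ)
          * (Complex.exp (Complex.I * ((κ * x + ω * y - r * t + θ : ℝ) : ℂ))
              * (Complex.I * ((ω : ℝ) : ℂ)))
        + ((p (x + m * y - c * t) : ℝ) : ℂ)
          * (Complex.exp (Complex.I * ((κ * x + ω * y - r * t + θ : ℝ) : ℂ))
              * (Complex.I * ((κ : ℝ) : ℂ)) * (Complex.I * ((ω : ℝ) : ℂ)))) := by
    intro x y t
    have hfun : (fun s => deriv (fun u => q s u t) y) = fun s =>
        ((deriv p (s + m * y - c * t) * m : ℝ) : ℂ)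
          * Complex.exp (Complex.I * ((κ * s + ω * y - r * t + θ : ℝ) : ℂ))
        + ((p (s + m * y - c * t) : ℝ) : ℂ)
          * (Complex.exp (Complex.I * ((κ * s + ω * y - r * t + θ : ℝ) : ℂ))
              * (Complex.I * ((ω : ℝ) : ℂ))) :=
      funext fun s => hd_y s y t
    rw [hfun]
    have h1 : HasDerivAt (fun s : ℝ => s + m * y - c * t) 1 x := by
      simpa using ((hasDerivAt_id x).add_const (m * y)).sub_const (c * t)
    have h2 : HasDerivAt (fun s : ℝ => deriv p (s + m * y - c * t) * m)
        (deriv (deriv p) (x + m * y - c * t) * m) x := by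
      simpa using ((hP' (x + m * y - c * t)).comp x h1).mul_const m
    have h2' : HasDerivAt (fun s : ℝ => p (s + m * y - c * t))
        (deriv p (x + m * y - c * t)) x := by
        have h := (hP (x + m * y - c * t)).comp x h1; rw [mul_one] at h; exact h
    have h3 : HasDerivAt (fun s : ℝ => κ * s + ω * y - r * t + θ) κ x := by
      simpa using ((((hasDerivAt_id x).const_mul κ).add_const (ω * y)).sub_const
        (r * t)).add_const θ
    have h4 := ((h3.ofReal_comp).const_mul Complex.I).cexp
    exact ((h2.ofReal_comp.mul h4).add
      (h2'.ofReal_comp.mul (h4.mul_const (Complex.I * ((ω : ℝ) : ℂ))))).deriv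
  -- key pointwise identity
  have key : ∀ ξ : ℝ,
      (r * p ξ + a * m * deriv (deriv p) ξ - a * κ * ω * p ξ + 2 * κ * b * p ξ ^ 3 = 0) ∧
      ((-c + a * (ω + m * κ)) * deriv p ξ = 0) := by
    intro ξ
    have heq := hpde ξ 0 0
    rw [hd_t, hd_xy, hd_x, hq] at heq
    simp only [mul_zero, zero_mul, sub_zero, add_zero, zero_add] at heq
    set E := Complex.exp (Complex.I * ((κ * ξ + θ : ℝ) : ℂ)) with hE
    set Ec := Complex.exp (-(Complex.I * ((κ * ξ + θ : ℝ) : ℂ))) with hEcdef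
    have hEc : (starRingEnd ℂ) E = Ec := by
      rw [hE, hEcdef, ← Complex.exp_conj]
      congr 1
      simp [Complex.conj_ofReal]
    have hE1 : E * Ec = 1 := by
      rw [hE, hEcdef, ← Complex.exp_add]
      simp
    simp only [map_add, map_mul, map_sub, map_neg, Complex.conj_ofReal, Complex.conj_I,
      hEc] at heq
    push_cast at heq
    have hZ : (Complex.I * (-(c : ℂ) * (deriv p ξ : ℝ)) + (r : ℂ) * (p ξ : ℝ)
        + (a : ℂ) * ((m : ℂ) * ((deriv (deriv p) ξ : ℝ) : ℂ))
        + (a : ℂ) * Complex.I * ((ω : ℂ) + (m : ℂ) * (κ : ℂ)) * ((deriv p ξ : ℝ) : ℂ)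
        - (a : ℂ) * (κ : ℂ) * (ω : ℂ) * ((p ξ : ℝ) : ℂ)
        + 2 * (κ : ℂ) * (b : ℂ) * ((p ξ : ℝ) : ℂ) ^ 3) * E = 0 := by
      linear_combination heq - (2 * (κ : ℂ) * (b : ℂ) * ((p ξ : ℝ) : ℂ) ^ 3 * E) * hE1
        + (((r : ℂ) - (a : ℂ) * κ * ω) * ((p ξ : ℝ) : ℂ) * E
            + 2 * (κ : ℂ) * (b : ℂ) * ((p ξ : ℝ) : ℂ) ^ 3 * E ^ 2 * Ec) * Complex.I_sq
    have hZ0 : (Complex.I * (-(c : ℂ) * (deriv p ξ : ℝ)) + (r : ℂ) * (p ξ : ℝ)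
        + (a : ℂ) * ((m : ℂ) * ((deriv (deriv p) ξ : ℝ) : ℂ))
        + (a : ℂ) * Complex.I * ((ω : ℂ) + (m : ℂ) * (κ : ℂ)) * ((deriv p ξ : ℝ) : ℂ)
        - (a : ℂ) * (κ : ℂ) * (ω : ℂ) * ((p ξ : ℝ) : ℂ)
        + 2 * (κ : ℂ) * (b : ℂ) * ((p ξ : ℝ) : ℂ) ^ 3) = 0 :=
      (mul_eq_zero.mp hZ).resolve_right (by rw [hE]; exact Complex.exp_ne_zero _)
    have hsplit : ((r * p ξ + a * m * deriv (deriv p) ξ - a * κ * ω * p ξ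
          + 2 * κ * b * p ξ ^ 3 : ℝ) : ℂ)
        + (((-c + a * (ω + m * κ)) * deriv p ξ : ℝ) : ℂ) * Complex.I = 0 := by
      rw [← hZ0]; push_cast; ring
    rw [← Complex.mk_eq_add_mul_I] at hsplit
    simpa [Complex.ext_iff] using hsplit
  obtain ⟨ξ₀, hξ₀⟩ := hp'
  have hc : c = a * m * κ + a * ω := by
    have h := (key ξ₀).2
    rcases mul_eq_zero.mp h with h' | h'
    · linarith
    · exact absurd h' hξ₀
  refine ⟨hc, fun ξ => ?_⟩
  have h := (key ξ).1
  linarith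
end

section
/- Let α = κb/(am) < 0 and let p₅ = -√((aκω-r)/(2κb)), p₆ = √((aκω-r)/(2κb)) with κb(aκω-r) > 0. Then p(ξ) = ((p₆-p₅)/2)·tanh(((p₆-p₅)/2)·√(-α)·ξ) satisfies the ODE am p'' + (r - aκω)p + 2κb p³ = 0 for all ξ ∈ ℝ. -/
lemma tanh_hasDerivAt (x : ℝ) : HasDerivAt Real.tanh (1 / Real.cosh x ^ 2) x := by
  have h := (Real.hasDerivAt_sinh x).div (Real.hasDerivAt_cosh x)
    (ne_of_gt (Real.cosh_pos x))
  have he : Real.tanh = fun x => Real.sinh x / Real.cosh x := by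
    funext y; exact Real.tanh_eq_sinh_div_cosh y
  rw [he]
  refine h.congr_deriv ?_
  have h2 := Real.cosh_sq_sub_sinh_sq x
  congr 1
  nlinarith [h2]

lemma aux_deriv2 (s k : ℝ) (ξ : ℝ) :
    deriv (deriv (fun x : ℝ => s * Real.tanh (k * x))) ξ
      = -2 * s * k ^ 2 * Real.sinh (k * ξ) / Real.cosh (k * ξ) ^ 3 := by
  have hd1 : ∀ x : ℝ, HasDerivAt (fun x : ℝ => s * Real.tanh (k * x))
      (s * k * (Real.cosh (k * x) ^ 2)⁻¹) x := by
    intro x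
    have h := ((tanh_hasDerivAt (k * x)).comp x ((hasDerivAt_id x).const_mul k)).const_mul s
    have heq : s * (1 / Real.cosh (k * x) ^ 2 * (k * 1)) = s * k * (Real.cosh (k * x) ^ 2)⁻¹ := by
      field_simp
    exact heq ▸ h
  have hdp : deriv (fun x : ℝ => s * Real.tanh (k * x))
      = fun x : ℝ => s * k * (Real.cosh (k * x) ^ 2)⁻¹ := funext fun x => (hd1 x).deriv
  rw [hdp]
  have hcosh : HasDerivAt (fun x : ℝ => Real.cosh (k * x)) (Real.sinh (k * ξ) * k) ξ := by
    exact ((Real.hasDerivAt_cosh (k * ξ)).comp ξ ((hasDerivAt_id ξ).const_mul k)).congr_deriv (by ring)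
  have hsq := hcosh.pow 2
  have hne : Real.cosh (k * ξ) ^ 2 ≠ 0 := by positivity
  have hd2 := (hsq.inv hne).const_mul (s * k)
  erw [hd2.deriv]
  have hc := ne_of_gt (Real.cosh_pos (k * ξ))
  field_simp
  simp only [Pi.pow_apply]
  ring

theorem stmt_4 (a m κ ω r b : ℝ) (ham : a * m ≠ 0)
    (hpos : κ * b * (a * κ * ω - r) > 0) (hneg : κ * b / (a * m) < 0)
    (p₅ p₆ : ℝ) (hp₅ : p₅ = -Real.sqrt ((a * κ * ω - r) / (2 * κ * b)))
    (hp₆ : p₆ = Real.sqrt ((a * κ * ω - r) / (2 * κ * b)))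
    (p : ℝ → ℝ)
    (hp : ∀ ξ, p ξ = ((p₆ - p₅) / 2) *
      Real.tanh (((p₆ - p₅) / 2) * Real.sqrt (-(κ * b / (a * m))) * ξ)) :
    ∀ ξ, a * m * deriv (deriv p) ξ + (r - a * κ * ω) * p ξ
      + 2 * κ * b * (p ξ) ^ 3 = 0 := by
  set s : ℝ := (p₆ - p₅) / 2 with hs
  set k : ℝ := s * Real.sqrt (-(κ * b / (a * m))) with hk
  have hκ : κ ≠ 0 := by rintro rfl; simp at hpos
  have hb : b ≠ 0 := by rintro rfl; simp at hpos
  have hκb : κ * b ≠ 0 := mul_ne_zero hκ hb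
  have hsq : s = Real.sqrt ((a * κ * ω - r) / (2 * κ * b)) := by
    rw [hs, hp₅, hp₆]; ring
  have hqnn : (0:ℝ) ≤ (a * κ * ω - r) / (2 * κ * b) := by
    have h : (a * κ * ω - r) / (2 * κ * b) = κ * b * (a * κ * ω - r) / (2 * (κ * b) ^ 2) := by
      field_simp
    rw [h]; positivity
  have hs2 : s ^ 2 = (a * κ * ω - r) / (2 * κ * b) := by
    rw [hsq, Real.sq_sqrt hqnn]
  have ht2 : Real.sqrt (-(κ * b / (a * m))) ^ 2 = -(κ * b / (a * m)) := by
    rw [Real.sq_sqrt]; linarith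
  have hamk : a * m * k ^ 2 = -(κ * b) * s ^ 2 := by
    rw [hk, mul_pow, ht2]; field_simp [left_ne_zero_of_mul ham, right_ne_zero_of_mul ham]
  have hrs : r - a * κ * ω = -(2 * (κ * b) * s ^ 2) := by
    rw [hs2]; field_simp; ring
  have hpe : p = fun ξ => s * Real.tanh (k * ξ) := funext hp
  intro ξ
  rw [hpe]
  simp only [aux_deriv2 s k ξ]
  rw [Real.tanh_eq_sinh_div_cosh, hrs]
  have hcne : Real.cosh (k * ξ) ≠ 0 := ne_of_gt (Real.cosh_pos _)
  have hcs := Real.cosh_sq_sub_sinh_sq (k * ξ)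
  clear_value s k
  field_simp
  linear_combination (-2 * s * Real.sinh (k * ξ)) * hamk +
    (-2 * κ * b * s ^ 3 * Real.sinh (k * ξ)) * hcs
end

section
/- Let β = (a κ ω - r)/(2κb) > 0 and γ = (r - aκω)/(am) with κb/(am) < 0. Then p(ξ) = √β·(1 + 2/(exp(√(2γ)·ξ) - 1)) = √β·coth((√(2γ)/2)·ξ) satisfies am p'' + (r - aκω)p + 2κb p³ = 0 on (0, ∞). -/
theorem stmt_7 (a m κ ω r b : ℝ) (ham : a * m ≠ 0)
    (hpos : κ * b * (a * κ * ω - r) > 0) (hneg : κ * b / (a * m) < 0)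
    (β γ : ℝ) (hβ : β = (a * κ * ω - r) / (2 * κ * b))
    (hγ : γ = (r - a * κ * ω) / (a * m))
    (p : ℝ → ℝ)
    (hp : ∀ ξ, p ξ = Real.sqrt β *
      (1 + 2 / (Real.exp (Real.sqrt (2 * γ) * ξ) - 1))) :
    ∀ ξ : ℝ, 0 < ξ →
      a * m * deriv (deriv p) ξ + (r - a * κ * ω) * p ξ
        + 2 * κ * b * (p ξ) ^ 3 = 0 := by
  have hκb : κ * b ≠ 0 := by
    intro h; rw [h] at hpos; simp at hpos
  have h2κb : 2 * κ * b ≠ 0 := by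
    intro h; apply hκb; linarith
  have h1 : κ * b * (a * m) < 0 := by
    rcases div_neg_iff.mp hneg with ⟨h, h'⟩ | ⟨h, h'⟩ <;> nlinarith
  have hγpos : 0 < γ := by
    rw [hγ]
    rcases lt_or_gt_of_ne ham with h | h
    · apply div_pos_of_neg_of_neg _ h; nlinarith
    · apply div_pos _ h; nlinarith
  have hβpos : 0 < β := by
    rw [hβ]
    rcases lt_or_gt_of_ne hκb with h | h
    · apply div_pos_of_neg_of_neg _ (by linarith); nlinarith
    · apply div_pos _ (by linarith); nlinarith
  set s := Real.sqrt (2 * γ) with hs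
  set c := Real.sqrt β with hc
  have hspos : 0 < s := Real.sqrt_pos.mpr (by linarith)
  have hcpos : 0 < c := Real.sqrt_pos.mpr hβpos
  have hs2 : s ^ 2 = 2 * γ := Real.sq_sqrt (by linarith)
  have hc2 : c ^ 2 = β := Real.sq_sqrt (by linarith)
  have hA : a * κ * ω - r ≠ 0 := by
    intro h; rw [h] at hpos; simp at hpos
  have hA' : r - a * κ * ω ≠ 0 := fun h => hA (by linarith)
  have hams : a * m = 2 * (r - a * κ * ω) / s ^ 2 := by
    rw [hs2, hγ]; field_simp
  have hcb : 2 * κ * b = (a * κ * ω - r) / c ^ 2 := by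
    rw [hc2, hβ]; field_simp
    rw [mul_div_assoc, div_self (by intro h; apply hA; linarith), mul_one]
  have hpq : p = fun x => c * (1 + 2 / (Real.exp (s * x) - 1)) := funext hp
  have hExp : ∀ x : ℝ, HasDerivAt (fun y => Real.exp (s * y))
      (s * Real.exp (s * x)) x := by
    intro x
    have h0 : HasDerivAt (fun y : ℝ => s * y) s x := by
      simpa using (hasDerivAt_id x).const_mul s
    have h2 := (Real.hasDerivAt_exp (s * x)).comp x h0
    rw [mul_comm] at h2
    exact h2
  have hne : ∀ x : ℝ, 0 < x → Real.exp (s * x) - 1 ≠ 0 := by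
    intro x hx
    have : (1:ℝ) < Real.exp (s * x) := by
      rw [show (1:ℝ) = Real.exp 0 by simp]
      exact Real.exp_lt_exp.mpr (by positivity)
    linarith
  have hd1 : ∀ x : ℝ, 0 < x → HasDerivAt p
      (-2 * c * s * Real.exp (s * x) / (Real.exp (s * x) - 1) ^ 2) x := by
    intro x hx
    rw [hpq]
    have h := (((hasDerivAt_const x (2:ℝ)).div ((hExp x).sub_const 1)
      (hne x hx)).const_add 1).const_mul c
    refine h.congr_deriv ?_
    field_simp
    ring
  have hderiv1 : Set.EqOn (deriv p)
      (fun x => -2 * c * s * Real.exp (s * x) / (Real.exp (s * x) - 1) ^ 2)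
      (Set.Ioi 0) := fun x hx => (hd1 x hx).deriv
  intro ξ hξ
  set e := Real.exp (s * ξ) with he
  have hne1 : e - 1 ≠ 0 := hne ξ hξ
  have hNd : HasDerivAt (fun y => -2 * c * s * Real.exp (s * y))
      (-2 * c * s * (s * e)) ξ := by
    have := (hExp ξ).const_mul (-2 * c * s)
    convert this using 2 <;> ring
  have hDd : HasDerivAt (fun y => (Real.exp (s * y) - 1) ^ 2)
      (2 * (e - 1) * (s * e)) ξ := by
    have := ((hExp ξ).sub_const 1).pow 2
    refine this.congr_deriv ?_
    push_cast; rw [he]; ring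
  have hd2 : HasDerivAt (fun x => -2 * c * s * Real.exp (s * x) / (Real.exp (s * x) - 1) ^ 2)
      ((-2 * c * s * (s * e) * (e - 1) ^ 2 - (-2 * c * s * e) * (2 * (e - 1) * (s * e)))
        / ((e - 1) ^ 2) ^ 2) ξ :=
    hNd.div hDd (pow_ne_zero 2 hne1)
  have hderiv2 : deriv (deriv p) ξ =
      (-2 * c * s * (s * e) * (e - 1) ^ 2 - (-2 * c * s * e) * (2 * (e - 1) * (s * e)))
        / ((e - 1) ^ 2) ^ 2 := by
    have hev : deriv p =ᶠ[nhds ξ]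
        (fun x => -2 * c * s * Real.exp (s * x) / (Real.exp (s * x) - 1) ^ 2) :=
      Filter.eventuallyEq_of_mem (isOpen_Ioi.mem_nhds hξ) hderiv1
    rw [Filter.EventuallyEq.deriv_eq hev]
    exact hd2.deriv
  rw [hderiv2, hp ξ, ← he, hams, hcb]
  field_simp
  ring
end

section
/- Let μ = p₅' √(-κb/(am)) with p₅' > 0 and 2κb p₅'² = 2(aκω - r), i.e. p₅' = √((aκω-r)/(κb)). Then p(ξ) = p₅'·csc(μξ) satisfies am p'' + (r - aκω)p + 2κb p³ = 0 on (0, π/μ). -/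
theorem stmt_8 (a m κ ω r b : ℝ) (ham : a * m ≠ 0)
    (hpos : κ * b * (a * κ * ω - r) > 0) (hneg : κ * b / (a * m) < 0)
    (p₅' μ : ℝ) (hp₅' : p₅' = Real.sqrt ((a * κ * ω - r) / (κ * b)))
    (hμ : μ = p₅' * Real.sqrt (-(κ * b / (a * m))))
    (p : ℝ → ℝ) (hp : ∀ ξ, p ξ = p₅' / Real.sin (μ * ξ)) :
    ∀ ξ : ℝ, 0 < ξ → ξ < Real.pi / μ →
      a * m * deriv (deriv p) ξ + (r - a * κ * ω) * p ξ
        + 2 * κ * b * (p ξ) ^ 3 = 0 := by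
  have hkb : κ * b ≠ 0 := by
    intro h; rw [h] at hpos; simp at hpos
  have hdivpos : 0 < (a * κ * ω - r) / (κ * b) := by
    rcases mul_pos_iff.mp hpos with ⟨h1, h2⟩ | ⟨h1, h2⟩
    · exact div_pos h2 h1
    · exact div_pos_of_neg_of_neg h2 h1
  have hp5pos : 0 < p₅' := by
    rw [hp₅']; exact Real.sqrt_pos.mpr hdivpos
  have hp5sq : p₅' ^ 2 = (a * κ * ω - r) / (κ * b) := by
    rw [hp₅', Real.sq_sqrt hdivpos.le]
  have hkbp : κ * b * p₅' ^ 2 = a * κ * ω - r := by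
    rw [hp5sq]; field_simp; exact mul_div_cancel_left₀ _ hkb
  have hnegpos : 0 < -(κ * b / (a * m)) := by linarith
  have hμpos : 0 < μ := by
    rw [hμ]; exact mul_pos hp5pos (Real.sqrt_pos.mpr hnegpos)
  have hμsq : μ ^ 2 = p₅' ^ 2 * (-(κ * b / (a * m))) := by
    rw [hμ, mul_pow, Real.sq_sqrt hnegpos.le]
  have hamμ : a * m * μ ^ 2 = r - a * κ * ω := by
    rw [hμsq]
    field_simp
    rw [show a * m * p₅' ^ 2 * κ * b = a * m * (κ * b * p₅' ^ 2) by ring, mul_div_cancel_left₀ _ ham]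
    linear_combination -hkbp
  -- the first derivative
  set g : ℝ → ℝ := fun ξ => -(p₅' * μ) * Real.cos (μ * ξ) / Real.sin (μ * ξ) ^ 2 with hg
  have hpfun : p = fun ξ => p₅' / Real.sin (μ * ξ) := funext hp
  have hsin : ∀ x : ℝ, HasDerivAt (fun ξ => Real.sin (μ * ξ)) (μ * Real.cos (μ * x)) x := by
    intro x
    have := (Real.hasDerivAt_sin (μ * x)).comp x ((hasDerivAt_id x).const_mul μ)
    exact this.congr_deriv (by ring)
  have hd1 : ∀ x : ℝ, Real.sin (μ * x) ≠ 0 → HasDerivAt p (g x) x := by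
    intro x hx
    rw [hpfun]
    have := (hasDerivAt_const x p₅').div (hsin x) hx
    refine this.congr_deriv ?_
    show _ = -(p₅' * μ) * Real.cos (μ * x) / Real.sin (μ * x) ^ 2
    field_simp
    ring
  have hU : IsOpen {x : ℝ | Real.sin (μ * x) ≠ 0} := by
    have hc : Continuous fun x : ℝ => Real.sin (μ * x) :=
      Real.continuous_sin.comp (continuous_const.mul continuous_id)
    exact isOpen_ne.preimage hc
  intro ξ hξ0 hξπ
  have hsξ : 0 < Real.sin (μ * ξ) := by
    apply Real.sin_pos_of_pos_of_lt_pi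
    · positivity
    · calc μ * ξ < μ * (Real.pi / μ) := by exact (mul_lt_mul_iff_right₀ hμpos).mpr hξπ
        _ = Real.pi := by field_simp
  have hsne : Real.sin (μ * ξ) ≠ 0 := hsξ.ne'
  have hev : deriv p =ᶠ[nhds ξ] g := by
    filter_upwards [hU.mem_nhds hsne] with y hy
    exact (hd1 y hy).deriv
  -- second derivative of p equals derivative of g
  have hgd : HasDerivAt g
      (p₅' * μ ^ 2 * (Real.sin (μ * ξ) ^ 2 + 2 * Real.cos (μ * ξ) ^ 2) / Real.sin (μ * ξ) ^ 3) ξ := by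
    have hcos : HasDerivAt (fun ξ => -(p₅' * μ) * Real.cos (μ * ξ))
        (-(p₅' * μ) * (-Real.sin (μ * ξ) * μ)) ξ := by
      have := ((Real.hasDerivAt_cos (μ * ξ)).comp ξ ((hasDerivAt_id ξ).const_mul μ)).const_mul
        (-(p₅' * μ))
      simpa [mul_comm, mul_assoc, mul_left_comm] using this
    have hden : HasDerivAt (fun ξ => Real.sin (μ * ξ) ^ 2)
        (2 * Real.sin (μ * ξ) * (μ * Real.cos (μ * ξ))) ξ := by
      have := (hsin ξ).pow 2
      exact this.congr_deriv (by simp)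
    have hne2 : Real.sin (μ * ξ) ^ 2 ≠ 0 := pow_ne_zero 2 hsne
    have := hcos.div hden hne2
    refine this.congr_deriv ?_
    field_simp
    ring
  have h2 : deriv (deriv p) ξ
      = p₅' * μ ^ 2 * (Real.sin (μ * ξ) ^ 2 + 2 * Real.cos (μ * ξ) ^ 2) / Real.sin (μ * ξ) ^ 3 := by
    rw [hev.deriv_eq]
    exact hgd.deriv
  rw [h2, hp]
  have hsc := Real.sin_sq_add_cos_sq (μ * ξ)
  field_simp
  linear_combination (p₅' * (Real.sin (μ*ξ)^2 + 2*Real.cos (μ*ξ)^2)) * hamμ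
    + (2*p₅') * hkbp + (2*(r - a*κ*ω)*p₅') * hsc
end

section
/- If q(x,y,t) = φ(ξ)·exp(i(φ̂(ξ) - μt)) with ξ = x + my - ct solves i q_t + a q_{xy} + i b q(q q̄_x - q̄ q_x) = 0, where φ is twice differentiable, nowhere zero, and φ̂ is differentiable, then the imaginary-part equation -c φ' + 2am φ' φ̂' + am φ φ̂'' = 0 holds, and consequently there is a constant e such that φ̂'(ξ) = e/(am φ(ξ)²) + c/(2am) for all ξ. -/
noncomputable def Pf (φh : ℝ → ℝ) (ξ : ℝ) : ℂ := Complex.exp (Complex.I * (φh ξ : ℂ))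

noncomputable def Ff (φ φh : ℝ → ℝ) (ξ : ℝ) : ℂ := (φ ξ : ℂ) * Pf φh ξ

noncomputable def Gf (φ φh : ℝ → ℝ) (ξ : ℝ) : ℂ :=
  (((deriv φ ξ : ℝ) : ℂ) + Complex.I * (φ ξ : ℂ) * ((deriv φh ξ : ℝ) : ℂ)) * Pf φh ξ

noncomputable def Hf (φ φh : ℝ → ℝ) (ξ : ℝ) : ℂ :=
  (((deriv (deriv φ) ξ : ℝ) : ℂ) - (φ ξ : ℂ) * ((deriv φh ξ : ℝ) : ℂ) ^ 2
    + Complex.I * (2 * ((deriv φ ξ : ℝ) : ℂ) * ((deriv φh ξ : ℝ) : ℂ)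
        + (φ ξ : ℂ) * ((deriv (deriv φh) ξ : ℝ) : ℂ))) * Pf φh ξ

theorem stmt_9 (a b m c μ : ℝ) (ham : a * m ≠ 0)
    (φ φh : ℝ → ℝ) (hφ : ContDiff ℝ 2 φ) (hφ0 : ∀ ξ, φ ξ ≠ 0)
    (hφh : ContDiff ℝ 2 φh)
    (q : ℝ → ℝ → ℝ → ℂ)
    (hq : ∀ x y t, q x y t =
      (φ (x + m * y - c * t) : ℂ) *
        Complex.exp (Complex.I * ((φh (x + m * y - c * t) - μ * t : ℝ) : ℂ)))
    (hpde : ∀ x y t,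
      Complex.I * deriv (fun s => q x y s) t
        + (a : ℂ) * deriv (fun s => deriv (fun u => q s u t) y) x
        + Complex.I * (b : ℂ) * q x y t *
          (q x y t * (starRingEnd ℂ) (deriv (fun s => q s y t) x)
            - (starRingEnd ℂ) (q x y t) * deriv (fun s => q s y t) x) = 0) :
    (∀ ξ, -c * deriv φ ξ + 2 * a * m * deriv φ ξ * deriv φh ξ
        + a * m * φ ξ * deriv (deriv φh) ξ = 0) ∧
      ∃ e : ℝ, ∀ ξ, deriv φh ξ = e / (a * m * (φ ξ) ^ 2) + c / (2 * a * m) := by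
  have h2 : (2 : WithTop ℕ∞) = 1 + 1 := by norm_num
  have hφd : Differentiable ℝ φ := hφ.differentiable (by norm_num)
  have hφ'd : Differentiable ℝ (deriv φ) := by
    rw [h2, contDiff_succ_iff_deriv] at hφ
    exact hφ.2.2.differentiable (by norm_num)
  have hφhd : Differentiable ℝ φh := hφh.differentiable (by norm_num)
  have hφh'd : Differentiable ℝ (deriv φh) := by
    rw [h2, contDiff_succ_iff_deriv] at hφh
    exact hφh.2.2.differentiable (by norm_num)
  -- derivative of Pf
  have hP : ∀ ξ, HasDerivAt (Pf φh) (Complex.I * ((deriv φh ξ : ℝ) : ℂ) * Pf φh ξ) ξ := by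
    intro ξ
    have h1 : HasDerivAt (fun ξ : ℝ => ((φh ξ : ℝ) : ℂ)) ((deriv φh ξ : ℝ) : ℂ) ξ :=
      ((hφhd ξ).hasDerivAt).ofReal_comp
    have h := (h1.const_mul Complex.I).cexp
    convert h using 1
    · rfl
    rw [Pf]; ring
  -- derivative of Ff
  have hF : ∀ ξ, HasDerivAt (Ff φ φh) (Gf φ φh ξ) ξ := by
    intro ξ
    have h1 : HasDerivAt (fun ξ : ℝ => ((φ ξ : ℝ) : ℂ)) ((deriv φ ξ : ℝ) : ℂ) ξ :=
      ((hφd ξ).hasDerivAt).ofReal_comp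
    have := h1.mul (hP ξ)
    convert this using 1
    · rfl
    · rfl
    simp only [Gf, Pf]
    ring
  -- derivative of Gf
  have hG : ∀ ξ, HasDerivAt (Gf φ φh) (Hf φ φh ξ) ξ := by
    intro ξ
    have h1 : HasDerivAt (fun ξ : ℝ => ((deriv φ ξ : ℝ) : ℂ)) ((deriv (deriv φ) ξ : ℝ) : ℂ) ξ :=
      ((hφ'd ξ).hasDerivAt).ofReal_comp
    have h2 : HasDerivAt (fun ξ : ℝ => ((φ ξ : ℝ) : ℂ)) ((deriv φ ξ : ℝ) : ℂ) ξ :=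
      ((hφd ξ).hasDerivAt).ofReal_comp
    have h3 : HasDerivAt (fun ξ : ℝ => ((deriv φh ξ : ℝ) : ℂ)) ((deriv (deriv φh) ξ : ℝ) : ℂ) ξ :=
      ((hφh'd ξ).hasDerivAt).ofReal_comp
    have hA : HasDerivAt (fun ξ : ℝ => (((deriv φ ξ : ℝ) : ℂ) + Complex.I * (φ ξ : ℂ) * ((deriv φh ξ : ℝ) : ℂ)))
        (((deriv (deriv φ) ξ : ℝ) : ℂ) + Complex.I * (((deriv φ ξ : ℝ) : ℂ) * ((deriv φh ξ : ℝ) : ℂ)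
          + (φ ξ : ℂ) * ((deriv (deriv φh) ξ : ℝ) : ℂ))) ξ := by
      have := h1.add (((h2.mul h3)).const_mul Complex.I)
      convert this using 1
      · rfl
      ext x
      simp only [Pi.add_apply, Pi.mul_apply]
      ring
    have := hA.mul (hP ξ)
    convert this using 1
    · rfl
    · rfl
    simp only [Hf, Pf]
    have hI : Complex.I * Complex.I = -1 := Complex.I_mul_I
    linear_combination (-(φ ξ : ℂ) * ((deriv φh ξ : ℝ) : ℂ) ^ 2 * Complex.exp (Complex.I * (φh ξ : ℂ))) * hI
  -- q in terms of Ff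
  have hqQ : ∀ x y t : ℝ, q x y t =
      Ff φ φh (x + m * y - c * t) * Complex.exp (-(Complex.I * μ) * (t : ℂ)) := by
    intro x y t
    rw [hq, Ff, Pf, mul_assoc, ← Complex.exp_add]
    congr 2
    push_cast
    ring
  -- derivative of the time-phase factor
  have hE : ∀ t : ℝ, HasDerivAt (fun s : ℝ => Complex.exp (-(Complex.I * μ) * (s : ℂ)))
      (-(Complex.I * μ) * Complex.exp (-(Complex.I * μ) * (t : ℂ))) t := by
    intro t
    have h1 : HasDerivAt (fun s : ℝ => ((s : ℝ) : ℂ)) 1 t := (hasDerivAt_id t).ofReal_comp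
    have h := (h1.const_mul (-(Complex.I * μ))).cexp
    convert h using 1
    ring
  have part1 : ∀ ξ, -c * deriv φ ξ + 2 * a * m * deriv φ ξ * deriv φh ξ
      + a * m * φ ξ * deriv (deriv φh) ξ = 0 := by
    intro ξ
    have hpd := hpde ξ 0 0
    have hdt : deriv (fun s => q ξ 0 s) 0 = Gf φ φh ξ * (-c) + Ff φ φh ξ * (-(Complex.I * μ)) := by
      have hfun : (fun s => q ξ 0 s)
          = fun s => Ff φ φh (ξ + m * 0 - c * s) * Complex.exp (-(Complex.I * μ) * (s : ℂ)) :=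
        funext fun s => hqQ ξ 0 s
      rw [hfun]
      have hin : HasDerivAt (fun s : ℝ => ξ + m * 0 - c * s) (-c) 0 := by
        simpa using ((hasDerivAt_id (0:ℝ)).const_mul c).const_sub (ξ + m * 0)
      have hmain : HasDerivAt
          (fun s : ℝ => Ff φ φh (ξ + m * 0 - c * s) * Complex.exp (-(Complex.I * μ) * (s : ℂ)))
          ((Gf φ φh (ξ + m * 0 - c * 0) * (-c)) * Complex.exp (-(Complex.I * μ) * ((0:ℝ) : ℂ))
            + Ff φ φh (ξ + m * 0 - c * 0)
              * (-(Complex.I * μ) * Complex.exp (-(Complex.I * μ) * ((0:ℝ) : ℂ)))) 0 := by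
        have hFc : HasDerivAt (fun s : ℝ => Ff φ φh (ξ + m * 0 - c * s))
            (Gf φ φh (ξ + m * 0 - c * 0) * (-c)) 0 := by
          simpa [Function.comp_def, Complex.real_smul, mul_comm] using
            HasDerivAt.scomp (x := (0:ℝ)) (hF (ξ + m * 0 - c * 0)) hin
        exact hFc.mul (hE 0)
      rw [hmain.deriv]
      norm_num
    have hdx : deriv (fun s => q s 0 0) ξ = Gf φ φh ξ := by
      have hfun : (fun s => q s 0 0)
          = fun s => Ff φ φh (s + m * 0 - c * 0) * Complex.exp (-(Complex.I * μ) * ((0:ℝ) : ℂ)) :=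
        funext fun s => hqQ s 0 0
      rw [hfun]
      have hin : HasDerivAt (fun s : ℝ => s + m * 0 - c * 0) 1 ξ := by
        simpa using ((hasDerivAt_id ξ).add_const (m * 0)).sub_const (c * 0)
      have hmain : HasDerivAt
          (fun s : ℝ => Ff φ φh (s + m * 0 - c * 0) * Complex.exp (-(Complex.I * μ) * ((0:ℝ) : ℂ)))
          ((Gf φ φh (ξ + m * 0 - c * 0) * 1) * Complex.exp (-(Complex.I * μ) * ((0:ℝ) : ℂ))) ξ := by
        have hFc : HasDerivAt (fun s : ℝ => Ff φ φh (s + m * 0 - c * 0))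
            (Gf φ φh (ξ + m * 0 - c * 0) * 1) ξ := by
          simpa [Function.comp_def, Complex.real_smul, mul_comm] using
            HasDerivAt.scomp (x := ξ) (hF (ξ + m * 0 - c * 0)) hin
        exact hFc.mul_const _
      rw [hmain.deriv]
      norm_num
    have hdy : ∀ s, deriv (fun u => q s u 0) 0 = (m : ℂ) * Gf φ φh s := by
      intro s
      have hfun : (fun u => q s u 0)
          = fun u => Ff φ φh (s + m * u - c * 0) * Complex.exp (-(Complex.I * μ) * ((0:ℝ) : ℂ)) :=
        funext fun u => hqQ s u 0
      rw [hfun]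
      have hin : HasDerivAt (fun u : ℝ => s + m * u - c * 0) m 0 := by
        simpa using (((hasDerivAt_id (0:ℝ)).const_mul m).const_add s).sub_const (c * 0)
      have hmain : HasDerivAt
          (fun u : ℝ => Ff φ φh (s + m * u - c * 0) * Complex.exp (-(Complex.I * μ) * ((0:ℝ) : ℂ)))
          ((Gf φ φh (s + m * 0 - c * 0) * m) * Complex.exp (-(Complex.I * μ) * ((0:ℝ) : ℂ))) 0 := by
        have hFc : HasDerivAt (fun u : ℝ => Ff φ φh (s + m * u - c * 0))
            (Gf φ φh (s + m * 0 - c * 0) * m) 0 := by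
          simpa [Function.comp_def, Complex.real_smul, mul_comm] using
            HasDerivAt.scomp (x := (0:ℝ)) (hF (s + m * 0 - c * 0)) hin
        exact hFc.mul_const _
      rw [hmain.deriv]
      norm_num
      ring
    have hdxy : deriv (fun s => deriv (fun u => q s u 0) 0) ξ = (m : ℂ) * Hf φ φh ξ := by
      have hfun : (fun s => deriv (fun u => q s u 0) 0) = fun s => (m : ℂ) * Gf φ φh s :=
        funext hdy
      rw [hfun, ((hG ξ).const_mul (m : ℂ)).deriv]
    have hq00 : q ξ 0 0 = Ff φ φh ξ := by
      rw [hqQ]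
      norm_num
    rw [hdt, hdxy, hdx, hq00] at hpd
    have hPP : (starRingEnd ℂ) (Pf φh ξ) * Pf φh ξ = 1 := by
      rw [Pf, ← Complex.exp_conj, ← Complex.exp_add]
      simp [map_mul, Complex.conj_ofReal, Complex.conj_I]
    have hcG : (starRingEnd ℂ) (Gf φ φh ξ)
        = (((deriv φ ξ : ℝ) : ℂ) - Complex.I * (φ ξ : ℂ) * ((deriv φh ξ : ℝ) : ℂ))
          * (starRingEnd ℂ) (Pf φh ξ) := by
      simp only [Gf, map_mul, map_add, Complex.conj_ofReal, Complex.conj_I]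
      ring
    have hcF : (starRingEnd ℂ) (Ff φ φh ξ) = (φ ξ : ℂ) * (starRingEnd ℂ) (Pf φh ξ) := by
      simp only [Ff, map_mul, Complex.conj_ofReal]
    rw [hcG, hcF] at hpd
    simp only [Ff, Gf, Hf] at hpd
    have hW : Pf φh ξ * (((c * φ ξ * deriv φh ξ + μ * φ ξ
          + a * m * (deriv (deriv φ) ξ - φ ξ * (deriv φh ξ) ^ 2)
          + 2 * b * (φ ξ) ^ 3 * deriv φh ξ : ℝ) : ℂ)
        + ((-c * deriv φ ξ + a * m * (2 * deriv φ ξ * deriv φh ξ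
            + φ ξ * deriv (deriv φh) ξ) : ℝ) : ℂ) * Complex.I) = 0 := by
      push_cast
      linear_combination hpd
        + (2 * (b : ℂ) * (φ ξ : ℂ) ^ 3 * ((deriv φh ξ : ℝ) : ℂ) * Complex.I * Complex.I
            * Pf φh ξ) * hPP
        + (((c : ℂ) * (φ ξ : ℂ) * ((deriv φh ξ : ℝ) : ℂ) + (μ : ℂ) * (φ ξ : ℂ)
            + 2 * (b : ℂ) * (φ ξ : ℂ) ^ 3 * ((deriv φh ξ : ℝ) : ℂ)) * Pf φh ξ)
          * Complex.I_mul_I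
    have hP0 : Pf φh ξ ≠ 0 := by rw [Pf]; exact Complex.exp_ne_zero _
    have hW0 := (mul_eq_zero.mp hW).resolve_left hP0
    have him := congrArg Complex.im hW0
    simp only [Complex.add_im, Complex.ofReal_im, Complex.mul_im, Complex.I_im, Complex.I_re,
      Complex.ofReal_re, Complex.zero_im, mul_zero, mul_one, zero_add, zero_mul, add_zero] at him
    linarith [him]
  refine ⟨part1, ?_⟩
  have hgd : ∀ ξ, HasDerivAt (fun ξ => a * m * ((φ ξ) ^ 2 * deriv φh ξ) - c / 2 * (φ ξ) ^ 2) 0 ξ := by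
    intro ξ
    have h1 : HasDerivAt φ (deriv φ ξ) ξ := (hφd ξ).hasDerivAt
    have h3 : HasDerivAt (deriv φh) (deriv (deriv φh) ξ) ξ := (hφh'd ξ).hasDerivAt
    have h4 := (((h1.pow 2).mul h3).const_mul (a * m)).sub ((h1.pow 2).const_mul (c / 2))
    convert h4 using 1
    · rfl
    · rfl
    · rfl
    have hp := part1 ξ
    simp only [Pi.pow_apply]
    push_cast
    linear_combination (-(φ ξ)) * hp
  have hconst : ∀ ξ, (fun ξ => a * m * ((φ ξ) ^ 2 * deriv φh ξ) - c / 2 * (φ ξ) ^ 2) ξ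
      = (fun ξ => a * m * ((φ ξ) ^ 2 * deriv φh ξ) - c / 2 * (φ ξ) ^ 2) 0 := fun ξ =>
    is_const_of_deriv_eq_zero (fun x => (hgd x).differentiableAt) (fun x => (hgd x).deriv) ξ 0
  refine ⟨a * m * ((φ 0) ^ 2 * deriv φh 0) - c / 2 * (φ 0) ^ 2, fun ξ => ?_⟩
  have h := hconst ξ
  simp only at h
  have hφ2 : (φ ξ) ^ 2 ≠ 0 := pow_ne_zero _ (hφ0 ξ)
  have ha : a ≠ 0 := fun h => ham (by rw [h]; ring)
  have hm : m ≠ 0 := fun h => ham (by rw [h]; ring)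
  have hφξ := hφ0 ξ
  field_simp
  linear_combination (2 : ℝ) * h
end

section
/- Let α₁ > 0, α₂ < 0, and u₃ = √(-2α₂/(3α₁)). Then φ(ξ) = √(-2α₂/(3α₁) + 2/(α₁ξ²)) satisfies the ODE φ'' = (α₁φ⁶ + α₂φ⁴ + α₃)/φ³ on (0, ∞), where α₃ = -4α₂³/(27α₁²). -/
theorem stmt_16 (α₁ α₂ α₃ : ℝ) (h1 : α₁ > 0) (h2 : α₂ < 0)
    (h3 : α₃ = -4 * α₂ ^ 3 / (27 * α₁ ^ 2))
    (φ : ℝ → ℝ)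
    (hφ : ∀ ξ, φ ξ = Real.sqrt (-2 * α₂ / (3 * α₁) + 2 / (α₁ * ξ ^ 2))) :
    ∀ ξ : ℝ, 0 < ξ →
      deriv (deriv φ) ξ =
        (α₁ * (φ ξ) ^ 6 + α₂ * (φ ξ) ^ 4 + α₃) / (φ ξ) ^ 3 := by
  have hφf : φ = fun ξ => Real.sqrt (-2 * α₂ / (3 * α₁) + 2 / (α₁ * ξ ^ 2)) := funext hφ
  subst hφf h3
  set g : ℝ → ℝ := fun ξ => -2 * α₂ / (3 * α₁) + 2 / (α₁ * ξ ^ 2) with hg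
  have hgpos : ∀ x : ℝ, 0 < x → 0 < g x := by
    intro x hx
    have h2' : (0:ℝ) < -2 * α₂ := by linarith
    have ha : 0 < -2 * α₂ / (3 * α₁) := div_pos h2' (by positivity)
    have hb : 0 < 2 / (α₁ * x ^ 2) := by positivity
    simpa only [hg] using add_pos ha hb
  have hgd : ∀ x : ℝ, 0 < x → HasDerivAt g (-4 / (α₁ * x ^ 3)) x := by
    intro x hx
    have hne : α₁ * x ^ 2 ≠ 0 := by positivity
    have hd : HasDerivAt (fun x : ℝ => α₁ * x ^ 2) (α₁ * (2 * x ^ 1)) x :=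
      (hasDerivAt_pow 2 x).const_mul α₁
    have hd2 : HasDerivAt (fun x : ℝ => 2 / (α₁ * x ^ 2))
        ((0 * (α₁ * x ^ 2) - 2 * (α₁ * (2 * x ^ 1))) / (α₁ * x ^ 2) ^ 2) x :=
      (hasDerivAt_const x (2:ℝ)).div hd hne
    have := hd2.const_add (-2 * α₂ / (3 * α₁))
    refine this.congr_deriv ?_
    field_simp
    ring
  set ψ : ℝ → ℝ := fun x => -2 / (α₁ * x ^ 3 * Real.sqrt (g x)) with hψ
  have hφd : ∀ x : ℝ, 0 < x → HasDerivAt (fun ξ => Real.sqrt (g ξ)) (ψ x) x := by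
    intro x hx
    have hgx := hgpos x hx
    have hs : (0:ℝ) < Real.sqrt (g x) := Real.sqrt_pos.mpr hgx
    have := ((hgd x hx).sqrt hgx.ne')
    convert this using 1
    simp only [hψ]
    rw [div_div, div_eq_div_iff (by positivity) (by positivity)]
    field_simp
    ring
  intro ξ hξ
  have hgξ := hgpos ξ hξ
  have hsξ : (0:ℝ) < Real.sqrt (g ξ) := Real.sqrt_pos.mpr hgξ
  have hev : deriv (fun ξ => Real.sqrt (g ξ)) =ᶠ[nhds ξ] ψ := by
    filter_upwards [isOpen_Ioi.mem_nhds (show ξ ∈ Set.Ioi (0:ℝ) from hξ)] with x hx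
    exact (hφd x hx).deriv
  rw [hev.deriv_eq]
  have hden : HasDerivAt (fun x : ℝ => α₁ * x ^ 3 * Real.sqrt (g x))
      (α₁ * (3 * ξ ^ 2) * Real.sqrt (g ξ) +
        α₁ * ξ ^ 3 * ((-4 / (α₁ * ξ ^ 3)) / (2 * Real.sqrt (g ξ)))) ξ := by
    have h1' : HasDerivAt (fun x : ℝ => α₁ * x ^ 3) (α₁ * (3 * ξ ^ 2)) ξ := by
      simpa using (hasDerivAt_pow 3 ξ).const_mul α₁
    exact h1'.mul ((hgd ξ hξ).sqrt hgξ.ne')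
  have hdenne : α₁ * ξ ^ 3 * Real.sqrt (g ξ) ≠ 0 := by positivity
  have hψd := (hasDerivAt_const ξ (-2:ℝ)).div hden hdenne
  rw [show deriv ψ ξ = _ from hψd.deriv]
  set s := Real.sqrt (g ξ) with hsdef
  have hs2 : s ^ 2 = g ξ := Real.sq_sqrt hgξ.le
  have e6 : s ^ 6 = (g ξ) ^ 3 := by rw [← hs2]; ring
  have e4 : s ^ 4 = (g ξ) ^ 2 := by rw [← hs2]; ring
  have e3 : s ^ 3 = g ξ * s := by rw [← hs2]; ring
  rw [e6, e4, e3]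
  have key : 6 * α₁ * ξ ^ 2 * g ξ - 4 =
      α₁ ^ 2 * ξ ^ 6 * (α₁ * (g ξ) ^ 3 + α₂ * (g ξ) ^ 2 + -4 * α₂ ^ 3 / (27 * α₁ ^ 2)) := by
    simp only [hg]
    field_simp
    ring
  have hN : 0 * (α₁ * ξ ^ 3 * s) -
      -2 * (α₁ * (3 * ξ ^ 2) * s + α₁ * ξ ^ 3 * (-4 / (α₁ * ξ ^ 3) / (2 * s))) =
      (6 * α₁ * ξ ^ 2 * g ξ - 4) / s := by
    rw [← hs2]
    field_simp
    ring
  have hD2 : (α₁ * ξ ^ 3 * s) ^ 2 = α₁ ^ 2 * ξ ^ 6 * g ξ := by rw [← hs2]; ring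
  rw [hN, hD2, div_div, div_eq_div_iff (by positivity) (by positivity)]
  linear_combination (g ξ * s) * key
end

section
/- Let α₁ > 0 and 0 < r₂' < r₃' be real constants, σ = √(2α₁(r₃' - r₂')). Then ψ(ξ) = r₂' + (r₃' - r₂')·(1 + e^{σξ})²/(1 - e^{σξ})² satisfies (ψ'(ξ))² = 2α₁(ψ(ξ) - r₂')(ψ(ξ) - r₃')² for all ξ > 0. -/
theorem stmt_18 (α₁ r₂' r₃' σ : ℝ) (h1 : α₁ > 0) (h2 : 0 < r₂') (h23 : r₂' < r₃')
    (hσ : σ = Real.sqrt (2 * α₁ * (r₃' - r₂')))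
    (ψ : ℝ → ℝ)
    (hψ : ∀ ξ, ψ ξ = r₂' + (r₃' - r₂') *
      (1 + Real.exp (σ * ξ)) ^ 2 / (1 - Real.exp (σ * ξ)) ^ 2) :
    ∀ ξ : ℝ, 0 < ξ →
      (deriv ψ ξ) ^ 2 = 2 * α₁ * (ψ ξ - r₂') * (ψ ξ - r₃') ^ 2 := by
  have hc : 0 < r₃' - r₂' := by linarith
  have hσpos : 0 < σ := by
    rw [hσ]; positivity
  have hσ2 : σ ^ 2 = 2 * α₁ * (r₃' - r₂') := by
    rw [hσ, sq, Real.mul_self_sqrt (by positivity)]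
  have hfun : ψ = fun ξ => r₂' + (r₃' - r₂') *
      (1 + Real.exp (σ * ξ)) ^ 2 / (1 - Real.exp (σ * ξ)) ^ 2 := funext hψ
  intro ξ hξ
  set u := Real.exp (σ * ξ) with hudef
  have hu : 1 < u := by
    rw [hudef, show (1:ℝ) = Real.exp 0 by simp]
    exact Real.exp_lt_exp.mpr (by positivity)
  have hne : (1 : ℝ) - u ≠ 0 := by intro h; nlinarith
  have hne2 : ((1 : ℝ) - u) ^ 2 ≠ 0 := pow_ne_zero _ hne
  have hE : HasDerivAt (fun ξ => Real.exp (σ * ξ)) (u * σ) ξ := by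
    simpa [hudef] using ((hasDerivAt_id ξ).const_mul σ).exp
  have hN : HasDerivAt (fun ξ => ((r₃' - r₂') * (1 + Real.exp (σ * ξ)) ^ 2))
      ((r₃' - r₂') * (2 * (1 + u) ^ 1 * (u * σ))) ξ := by
    exact ((hE.const_add 1).pow 2).const_mul _
  have hD : HasDerivAt (fun ξ => ((1 - Real.exp (σ * ξ)) ^ 2))
      (2 * (1 - u) ^ 1 * (-(u * σ))) ξ := by
    have := ((hE.const_sub 1).neg).pow 2
    refine HasDerivAt.congr_deriv ((hE.const_sub 1).pow 2) ?_
    show ((2:ℕ):ℝ) * (1 - u) ^ (2 - 1) * -(u * σ) = _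
    norm_num
  have hψd : HasDerivAt ψ
      (((r₃' - r₂') * (2 * (1 + u) ^ 1 * (u * σ)) * ((1 - u) ^ 2)
        - (r₃' - r₂') * (1 + u) ^ 2 * (2 * (1 - u) ^ 1 * (-(u * σ))))
        / ((1 - u) ^ 2) ^ 2) ξ := by
    rw [hfun]
    exact ((hN.div hD hne2).const_add r₂')
  have h3 : ((1 : ℝ) - u) ^ 3 ≠ 0 := pow_ne_zero _ hne
  have hval : (((r₃' - r₂') * (2 * (1 + u) ^ 1 * (u * σ)) * ((1 - u) ^ 2)
        - (r₃' - r₂') * (1 + u) ^ 2 * (2 * (1 - u) ^ 1 * (-(u * σ))))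
        / ((1 - u) ^ 2) ^ 2) = 4 * (r₃' - r₂') * u * σ * (1 + u) / (1 - u) ^ 3 := by
    rw [div_eq_div_iff (pow_ne_zero 2 hne2) h3]
    ring
  have hexp : (4 * (r₃' - r₂') * u * σ * (1 + u) / (1 - u) ^ 3) ^ 2
      = σ ^ 2 * (16 * (r₃' - r₂') ^ 2 * u ^ 2 * (1 + u) ^ 2) / ((1 - u) ^ 2) ^ 3 := by
    rw [div_pow, show (((1:ℝ) - u) ^ 3) ^ 2 = ((1 - u) ^ 2) ^ 3 by ring]
    congr 1
    ring
  have e2 : r₂' + (r₃' - r₂') * (1 + u) ^ 2 / (1 - u) ^ 2 - r₃'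
      = (r₃' - r₂') * (4 * u) / (1 - u) ^ 2 := by
    field_simp
    ring
  rw [hψd.deriv, hval, hexp, hσ2, hψ ξ,
    show r₂' + (r₃' - r₂') * (1 + u) ^ 2 / (1 - u) ^ 2 - r₂'
      = (r₃' - r₂') * (1 + u) ^ 2 / (1 - u) ^ 2 by ring, e2]
  obtain ⟨v, hv, hvne⟩ : ∃ v : ℝ, (1 - u) ^ 2 = v ∧ v ≠ 0 := ⟨_, rfl, hne2⟩
  rw [hv]
  field_simp
  ring
end
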